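/- R-max progress lemma: let π be an optimal policy for the empirical model (f̂, R̂) maintained by R-max. Then either π is optimal for the true MDP (f, R), or executing π from the start state visits at least one state-action pair not yet recorded in the empirical model. Consequently, R-max run for S·A episodes returns an optimal policy for any deterministic MDP, giving sample complexity at most S·A·T. -/

import Mathlib

open Finset Classical

/-- Total reward of playing a list of actions from state `s` in a deterministic MDP. -/
def seqReturn {S : Type*} (A : ℕ) (f : S → Fin A → S) (R : S → Fin A → ℝ) :
    S → List (Fin A) → ℝ
  | _, [] => 0
  | s, a :: rest => R s a + seqReturn A f R (f s a) rest

/-- Optimal value function by fuel recursion. -/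
noncomputable def optV {S : Type*} (A : ℕ) (f : S → Fin A → S) (R : S → Fin A → ℝ) :
    ℕ → S → ℝ
  | 0, _ => 0
  | n + 1, s => ⨆ a : Fin A, (R s a + optV A f R n (f s a))

/-- Optimal Q-function at timestep `t` (horizon `T`). -/
noncomputable def optQ {S : Type*} (A T : ℕ) (f : S → Fin A → S) (R : S → Fin A → ℝ)
    (t : ℕ) (s : S) (a : Fin A) : ℝ :=
  R s a + optV A f R (T - t) (f s a)

/-- Trajectory of a deterministic policy: `polState ... t` is the state at timestep `t+1`. -/
def polState {S : Type*} (A : ℕ) (f : S → Fin A → S) (p : ℕ → S → Fin A) (s1 : S) : ℕ → S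
  | 0 => s1
  | t + 1 => f (polState A f p s1 t) (p (t + 1) (polState A f p s1 t))

/-- Return of a deterministic policy over a `T`-step episode from `s1`. -/
noncomputable def polRet {S : Type*} (A T : ℕ) (f : S → Fin A → S) (R : S → Fin A → ℝ)
    (p : ℕ → S → Fin A) (s1 : S) : ℝ :=
  seqReturn A f R s1 (List.ofFn (fun i : Fin T => p (i + 1) (polState A f p s1 i)))

/-- Empirical transition model of R-max: unseen state-action pairs are self-loops. -/
noncomputable def fhat {S : Type*} (A : ℕ) (f : S → Fin A → S) (K : Set (S × Fin A)) :
    S → Fin A → S :=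
  fun s a => if (s, a) ∈ K then f s a else s

/-- Empirical reward model of R-max: unseen state-action pairs get reward `Rmax`. -/
noncomputable def Rhat {S : Type*} (A : ℕ) (R : S → Fin A → ℝ) (Rmax : ℝ)
    (K : Set (S × Fin A)) : S → Fin A → ℝ :=
  fun s a => if (s, a) ∈ K then R s a else Rmax

/-- State-action pairs visited when executing policy `p` from `s1` for `T` steps
in the true MDP. -/
def visited {S : Type*} (A T : ℕ) (f : S → Fin A → S) (p : ℕ → S → Fin A) (s1 : S) :
    Set (S × Fin A) :=
  {pair | ∃ t, t < T ∧
    pair = (polState A f p s1 t, p (t + 1) (polState A f p s1 t))}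


section Aux
variable {S : Type*} {A : ℕ}

lemma polState_shift (f : S → Fin A → S) (p : ℕ → S → Fin A) (s1 : S) (i : ℕ) :
    polState A f (fun t s => p (t+1) s) (f s1 (p 1 s1)) i = polState A f p s1 (i+1) := by
  induction i with
  | zero => rfl
  | succ i ih => simp [polState, ih]

lemma sum_shift (T : ℕ) (f : S → Fin A → S) (R : S → Fin A → ℝ)
    (p : ℕ → S → Fin A) (s1 : S) :
    ∑ i : Fin (T+1), R (polState A f p s1 i) (p (i+1) (polState A f p s1 i))
      = R s1 (p 1 s1) + ∑ i : Fin T,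
          R (polState A f (fun t s => p (t+1) s) (f s1 (p 1 s1)) i)
            (p ((i:ℕ)+1+1) (polState A f (fun t s => p (t+1) s) (f s1 (p 1 s1)) i)) := by
  rw [Fin.sum_univ_succ]
  simp only [Fin.val_zero, Fin.val_succ, zero_add, polState_shift]
  rfl

lemma polRet_eq_sum (T : ℕ) (f : S → Fin A → S) (R : S → Fin A → ℝ)
    (p : ℕ → S → Fin A) (s1 : S) :
    polRet A T f R p s1
      = ∑ i : Fin T, R (polState A f p s1 i) (p (i+1) (polState A f p s1 i)) := by
  induction T generalizing p s1 with
  | zero => simp [polRet, seqReturn]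
  | succ T ih =>
    have key := ih (fun t s => p (t+1) s) (f s1 (p 1 s1))
    rw [polRet] at key
    rw [polRet, List.ofFn_succ]
    show R s1 (p 1 s1) + seqReturn A f R (f s1 (p 1 s1)) _ = _
    have hrest : (List.ofFn fun i : Fin T =>
        p ((i.succ : Fin (T+1)) + 1) (polState A f p s1 (i.succ : Fin (T+1))))
        = List.ofFn (fun i : Fin T => p ((i : ℕ)+1+1)
            (polState A f (fun t s => p (t+1) s) (f s1 (p 1 s1)) i)) := by
      congr 1; funext i; simp [polState_shift, Fin.val_succ]
    rw [hrest, key, sum_shift]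

lemma optV_le_of_bound (hA : 0 < A) (f : S → Fin A → S) (R : S → Fin A → ℝ) {Rmax : ℝ}
    (hR : ∀ s a, R s a ≤ Rmax) (n : ℕ) (s : S) :
    optV A f R n s ≤ n * Rmax := by
  induction n generalizing s with
  | zero => simp [optV]
  | succ n ih =>
    have : Nonempty (Fin A) := ⟨⟨0, hA⟩⟩
    rw [optV]
    apply ciSup_le
    intro a
    calc R s a + optV A f R n (f s a) ≤ Rmax + n * Rmax := add_le_add (hR s a) (ih (f s a))
      _ = ((n+1 : ℕ) : ℝ) * Rmax := by push_cast; ring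

lemma polRet_le_optV (T : ℕ) (f : S → Fin A → S) (R : S → Fin A → ℝ)
    (p : ℕ → S → Fin A) (s1 : S) :
    polRet A T f R p s1 ≤ optV A f R T s1 := by
  induction T generalizing p s1 with
  | zero => simp [polRet, seqReturn, optV]
  | succ T ih =>
    have key := ih (fun t s => p (t+1) s) (f s1 (p 1 s1))
    rw [polRet_eq_sum] at key ⊢
    rw [optV, sum_shift]
    calc R s1 (p 1 s1) + ∑ i : Fin T,
            R (polState A f (fun t s => p (t+1) s) (f s1 (p 1 s1)) i)
              (p ((i:ℕ)+1+1) (polState A f (fun t s => p (t+1) s) (f s1 (p 1 s1)) i))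
        ≤ R s1 (p 1 s1) + optV A f R T (f s1 (p 1 s1)) := add_le_add_right key _
      _ ≤ ⨆ a : Fin A, (R s1 a + optV A f R T (f s1 a)) :=
          le_ciSup (f := fun a => R s1 a + optV A f R T (f s1 a))
            (Finite.bddAbove_range _) (p 1 s1)

lemma optV_unseen_ge (f : S → Fin A → S) (R : S → Fin A → ℝ) (Rmax : ℝ)
    (K : Set (S × Fin A)) {s : S} {a : Fin A} (ha : (s, a) ∉ K) (n : ℕ) :
    (n : ℝ) * Rmax ≤ optV A (fhat A f K) (Rhat A R Rmax K) n s := by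
  induction n with
  | zero => simp [optV]
  | succ n ih =>
    rw [optV]
    calc ((n+1 : ℕ) : ℝ) * Rmax = Rmax + n * Rmax := by push_cast; ring
      _ ≤ Rhat A R Rmax K s a + optV A (fhat A f K) (Rhat A R Rmax K) n (fhat A f K s a) := by
          simp only [Rhat, fhat, if_neg ha]; gcongr
      _ ≤ _ := le_ciSup (f := fun a => Rhat A R Rmax K s a
            + optV A (fhat A f K) (Rhat A R Rmax K) n (fhat A f K s a))
            (Finite.bddAbove_range _) a

lemma optV_le_model (hA : 0 < A) (f : S → Fin A → S) (R : S → Fin A → ℝ) {Rmax : ℝ}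
    (hR : ∀ s a, R s a ≤ Rmax) (K : Set (S × Fin A)) (n : ℕ) (s : S) :
    optV A f R n s ≤ optV A (fhat A f K) (Rhat A R Rmax K) n s := by
  induction n generalizing s with
  | zero => simp [optV]
  | succ n ih =>
    have : Nonempty (Fin A) := ⟨⟨0, hA⟩⟩
    rw [optV, optV]
    apply ciSup_le
    intro a
    refine le_trans ?_ (le_ciSup (f := fun a => Rhat A R Rmax K s a
        + optV A (fhat A f K) (Rhat A R Rmax K) n (fhat A f K s a))
        (Finite.bddAbove_range _) a)
    by_cases h : (s, a) ∈ K
    · simp only [Rhat, fhat, if_pos h]; gcongr; exact ih (f s a)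
    · simp only [Rhat, fhat, if_neg h]
      exact add_le_add (hR s a)
        (le_trans (optV_le_of_bound hA f R hR n (f s a)) (optV_unseen_ge f R Rmax K h n))

end Aux

lemma rmax_progress {S : Type*} (A T : ℕ) (hApos : 0 < A)
    (f : S → Fin A → S) (R : S → Fin A → ℝ) (s1 : S) (Rmax : ℝ)
    (hR : ∀ s a, R s a ≤ Rmax) (K : Set (S × Fin A)) (p : ℕ → S → Fin A)
    (hopt : polRet A T (fhat A f K) (Rhat A R Rmax K) p s1
        = optV A (fhat A f K) (Rhat A R Rmax K) T s1) :
    polRet A T f R p s1 = optV A f R T s1 ∨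
      ∃ pair ∈ visited A T f p s1, pair ∉ K := by
  by_cases hvis : ∃ pair ∈ visited A T f p s1, pair ∉ K
  · exact Or.inr hvis
  push_neg at hvis
  left
  have hstate : ∀ t, t ≤ T → polState A (fhat A f K) p s1 t = polState A f p s1 t := by
    intro t
    induction t with
    | zero => intro _; rfl
    | succ t ih =>
      intro ht
      have ht' : t < T := lt_of_lt_of_le (Nat.lt_succ_self t) ht
      have heq := ih (le_of_lt ht')
      have hmem := hvis _ ⟨t, ht', rfl⟩
      simp [polState, heq, fhat, hmem]
  have hret : polRet A T (fhat A f K) (Rhat A R Rmax K) p s1 = polRet A T f R p s1 := by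
    rw [polRet_eq_sum, polRet_eq_sum]
    apply Finset.sum_congr rfl
    intro i _
    have hi : (i : ℕ) < T := i.isLt
    have hmem := hvis _ ⟨(i : ℕ), hi, rfl⟩
    rw [hstate _ (le_of_lt hi)]
    simp [Rhat, hmem]
  have h1 : polRet A T f R p s1 ≤ optV A f R T s1 := polRet_le_optV T f R p s1
  have h2 : optV A f R T s1 ≤ optV A (fhat A f K) (Rhat A R Rmax K) T s1 :=
    optV_le_model hApos f R hR K T s1
  linarith

/--
R-max progress lemma and sample complexity.  Let `Rmax = max_{s,a} R(s,a)`.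
(a) If a deterministic policy `p` is optimal for R-max's empirical model built from the
seen set `K` (i.e. its model return equals the model's optimal value), then either `p` is
optimal for the true MDP, or executing `p` from the start state visits a state-action pair
not in `K`.
(b) Consequently, running R-max — starting with `K₀ = ∅`, at each episode `j` executing a
policy `p j` that is optimal for the current model and adding the visited pairs to the
model — produces an optimal policy for the true MDP within `S·A` episodes (hence sample
complexity at most `S·A·T` timesteps).
-/
theorem rmax_progress_and_sample_complexity
    {S : Type*} [Fintype S] [Nonempty S] (A T : ℕ) (hApos : 0 < A)
    (f : S → Fin A → S) (R : S → Fin A → ℝ) (s1 : S)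
    (Rmax : ℝ) (hRmax : Rmax = ⨆ p : S × Fin A, R p.1 p.2) :
    -- (a) progress lemma
    (∀ (K : Set (S × Fin A)) (p : ℕ → S → Fin A),
      polRet A T (fhat A f K) (Rhat A R Rmax K) p s1
          = optV A (fhat A f K) (Rhat A R Rmax K) T s1 →
      (polRet A T f R p s1 = optV A f R T s1 ∨
        ∃ pair ∈ visited A T f p s1, pair ∉ K)) ∧
    -- (b) R-max finds an optimal policy within S·A episodes
    (∀ (Ks : ℕ → Set (S × Fin A)) (ps : ℕ → ℕ → S → Fin A),
      Ks 0 = ∅ →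
      (∀ j, polRet A T (fhat A f (Ks j)) (Rhat A R Rmax (Ks j)) (ps j) s1
          = optV A (fhat A f (Ks j)) (Rhat A R Rmax (Ks j)) T s1) →
      (∀ j, Ks (j + 1) = Ks j ∪ visited A T f (ps j) s1) →
      ∃ j ≤ Fintype.card S * A, polRet A T f R (ps j) s1 = optV A f R T s1) := by
  have hNE : Nonempty (Fin A) := ⟨⟨0, hApos⟩⟩
  have hR : ∀ s a, R s a ≤ Rmax := by
    intro s a
    rw [hRmax]
    exact le_ciSup (f := fun p : S × Fin A => R p.1 p.2) (Finite.bddAbove_range _) (s, a)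
  constructor
  · intro K p hopt
    exact rmax_progress A T hApos f R s1 Rmax hR K p hopt
  · intro Ks ps h0 hopt hstep
    by_contra hcon
    push_neg at hcon
    set N := Fintype.card S * A with hN
    have hmono : ∀ j ≤ N, Ks j ⊂ Ks (j + 1) := by
      intro j hj
      obtain ⟨pair, hpv, hpK⟩ :=
        (rmax_progress A T hApos f R s1 Rmax hR (Ks j) (ps j) (hopt j)).resolve_left
          (hcon j hj)
      rw [hstep j]
      exact (Set.ssubset_iff_of_subset Set.subset_union_left).mpr
        ⟨pair, Set.mem_union_right _ hpv, hpK⟩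
    have hcard : ∀ j ≤ N + 1, j ≤ (Ks j).ncard := by
      intro j
      induction j with
      | zero => intro _; exact Nat.zero_le _
      | succ j ih =>
        intro hj
        have hj' : j ≤ N := Nat.lt_succ_iff.mp hj
        exact Nat.succ_le_of_lt (lt_of_le_of_lt (ih (le_trans hj' (Nat.le_succ N)))
          (Set.ncard_lt_ncard (hmono j hj') (Set.toFinite _)))
    have hlow : N + 1 ≤ (Ks (N + 1)).ncard := hcard (N + 1) le_rfl
    have hub : (Ks (N + 1)).ncard ≤ N := by
      have h := Set.ncard_le_ncard (Set.subset_univ (Ks (N + 1))) (Set.toFinite _)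
      simpa [Set.ncard_univ, Nat.card_eq_fintype_card, Fintype.card_prod, hN] using h
    omega
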